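/- (Label-consistency term bound.) Let φ : X → Z be L-Lipschitz and h : Z → {0,1}, and suppose: (i) there exist β ≥ 0 and a measurable set B ⊆ Z such that p_T^φ is absolutely continuous with respect to p_S^φ on B with dp_T^φ/dp_S^φ(z) ≤ 1+β for all z ∈ B, and p_T^φ(B) ≥ 1−δ_1; (ii) there exist disjoint sets C_0, C_1 ⊆ X with p_S(C_0 ∪ C_1) ≥ 1−δ_2, f(x) = i for all x ∈ C_i (i = 0,1), and inf{d_Z(z_0, z_1) : z_0 ∈ φ(C_0), z_1 ∈ φ(C_1)} ≥ Δ > 0; (iii) there exists C_T ⊆ X with φ(C_T) ⊆ φ(C_0 ∪ C_1), p_T(C_T) ≥ 1−δ_3, and such that for every x ∈ C_T there is x' ∈ C_T ∩ (C_0 ∪ C_1) with f(x') = f(x) and a finite sequence x_0, …, x_m ∈ C_T with x_0 = x, x_m = x', and d_X(x_{i−1}, x_i) < Δ/L for all i. Then ∫_Z (r_T(z; φ,h) − r_S(z; φ,h)) dp_T^φ(z) ≤ 2δ_1 + 2(1+β)δ_2 + δ_3. -/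

import Mathlib

open MeasureTheory
open scoped ENNReal

private lemma aux_nonneg {X : Type*} [MeasurableSpace X] (μ : Measure X)
    [IsProbabilityMeasure μ] {s : Set X} {δ : ℝ}
    (hs : ENNReal.ofReal (1 - δ) ≤ μ s) : 0 ≤ δ := by
  by_contra hneg
  push_neg at hneg
  have h1 : (1 : ℝ≥0∞) < ENNReal.ofReal (1 - δ) := ENNReal.one_lt_ofReal.2 (by linarith)
  exact absurd (hs.trans prob_le_one) (not_le.2 h1)

private lemma aux_small {X : Type*} [MeasurableSpace X] (μ : Measure X)
    [IsProbabilityMeasure μ] {s t : Set X} {δ : ℝ}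
    (hs : ENNReal.ofReal (1 - δ) ≤ μ s) (ht : MeasurableSet t) (hst : t ⊆ sᶜ) :
    μ t ≤ ENNReal.ofReal δ := by
  have hstc : s ⊆ tᶜ := Set.subset_compl_comm.mp hst
  have h2 : μ t + μ tᶜ = 1 := by rw [measure_add_measure_compl ht, measure_univ]
  have h3 : μ t + ENNReal.ofReal (1 - δ) ≤ 1 := by
    calc μ t + ENNReal.ofReal (1 - δ) ≤ μ t + μ tᶜ :=
          add_le_add le_rfl (hs.trans (measure_mono hstc))
      _ = 1 := h2
  have h4 : (1 : ℝ≥0∞) ≤ ENNReal.ofReal δ + ENNReal.ofReal (1 - δ) := by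
    calc (1 : ℝ≥0∞) = ENNReal.ofReal (δ + (1 - δ)) := by norm_num
      _ ≤ ENNReal.ofReal δ + ENNReal.ofReal (1 - δ) := ENNReal.ofReal_add_le
  exact ENNReal.le_of_add_le_add_right ENNReal.ofReal_ne_top (h3.trans h4)

private lemma aux_cond {X Z : Type*} [MeasurableSpace X] [MeasurableSpace Z]
    (μ : Measure X) [IsProbabilityMeasure μ] {f : X → ℝ} (hf : Measurable f)
    (hf01 : ∀ x, f x = 0 ∨ f x = 1) {φ : X → Z} (hφ : Measurable φ)
    {g : Z → ℝ} (hg : Measurable g)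
    (hcond : μ[f | MeasurableSpace.comap φ inferInstance] =ᵐ[μ] fun x => g (φ x))
    {A : Set Z} (hA : MeasurableSet A) :
    ∫ z in A, g z ∂(μ.map φ) = (μ (f ⁻¹' {1} ∩ φ ⁻¹' A)).toReal := by
  have hfi : Integrable f μ := by
    refine Integrable.mono' (integrable_const 1) hf.aestronglyMeasurable ?_
    filter_upwards with x
    rcases hf01 x with h0 | h0 <;> simp [h0]
  have hsm : MeasurableSet (φ ⁻¹' A) := hφ hA
  rw [setIntegral_map hA hg.aestronglyMeasurable hφ.aemeasurable]
  have h1 : ∫ x in φ ⁻¹' A, g (φ x) ∂μ = ∫ x in φ ⁻¹' A, f x ∂μ := by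
    calc ∫ x in φ ⁻¹' A, g (φ x) ∂μ
        = ∫ x in φ ⁻¹' A, (μ[f | MeasurableSpace.comap φ inferInstance]) x ∂μ :=
          (setIntegral_congr_ae hsm (by filter_upwards [hcond] with x hx _; exact hx)).symm
      _ = ∫ x in φ ⁻¹' A, f x ∂μ := setIntegral_condExp hφ.comap_le hfi ⟨A, hA, rfl⟩
  rw [h1]
  have hfind : f = Set.indicator (f ⁻¹' {1}) (fun _ => (1 : ℝ)) := by
    funext x
    rcases hf01 x with h0 | h1
    · simp [Set.indicator_apply, h0]
    · simp [Set.indicator_apply, h1]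
  rw [hfind, setIntegral_indicator (hf (measurableSet_singleton 1))]
  rw [setIntegral_const, Set.inter_comm]
  simp [← hfind]
  rfl

/-- **label-consistency term bound.** Under (i) imperfect
asymmetrically-relaxed alignment on a set `B` (`density ratio ≤ 1+β`,
`pT.map φ B ≥ 1−δ1`), (ii) `Δ`-separated disjoint label-pure source clusters `C0, C1`
with `pS (C0 ∪ C1) ≥ 1−δ2`, and (iii) a set `CT` of target mass `≥ 1−δ3` mapped into
`φ '' (C0 ∪ C1)` and chain-connected (with steps `< Δ/L`) within `CT` to label-consistent
points of `C0 ∪ C1`, the label-consistency term satisfies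
`∫ (r_T − r_S) d(pT.map φ) ≤ 2δ1 + 2(1+β)δ2 + δ3`, where `r_U(z) = |h z − g_U z|` and
`g_U = f_U^φ` is a version of the conditional expectation of `f` given `φ` under `p_U`. -/
theorem label_consistency_term_bound
    {X Z : Type*} [MetricSpace X] [MetricSpace Z]
    [MeasurableSpace X] [BorelSpace X] [MeasurableSpace Z] [BorelSpace Z]
    (pS pT : Measure X) [IsProbabilityMeasure pS] [IsProbabilityMeasure pT]
    (f : X → ℝ) (hf : Measurable f) (hf01 : ∀ x, f x = 0 ∨ f x = 1)
    (φ : X → Z) (hφ : Measurable φ)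
    (h : Z → ℝ) (hh : Measurable h) (hh01 : ∀ z, h z = 0 ∨ h z = 1)
    (gS gT : Z → ℝ) (hgS : Measurable gS) (hgT : Measurable gT)
    (hgS01 : ∀ z, gS z ∈ Set.Icc (0 : ℝ) 1) (hgT01 : ∀ z, gT z ∈ Set.Icc (0 : ℝ) 1)
    (hcondS : pS[f | MeasurableSpace.comap φ inferInstance] =ᵐ[pS] fun x => gS (φ x))
    (hcondT : pT[f | MeasurableSpace.comap φ inferInstance] =ᵐ[pT] fun x => gT (φ x))
    (L β Δ δ1 δ2 δ3 : ℝ) (hβ : 0 ≤ β) (hΔ : 0 < Δ)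
    (hLip : ∀ x1 x2, dist (φ x1) (φ x2) ≤ L * dist x1 x2)
    -- (i) imperfect asymmetrically-relaxed distribution alignment
    (B : Set Z) (hB : MeasurableSet B)
    (hratio : (pT.map φ).restrict B ≤ ENNReal.ofReal (1 + β) • (pS.map φ).restrict B)
    (hBmass : ENNReal.ofReal (1 - δ1) ≤ pT.map φ B)
    -- (ii) separated label-pure source clusters
    (C0 C1 : Set X) (hdisj : Disjoint C0 C1)
    (hCmass : ENNReal.ofReal (1 - δ2) ≤ pS (C0 ∪ C1))
    (hC0 : ∀ x ∈ C0, f x = 0) (hC1 : ∀ x ∈ C1, f x = 1)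
    (hsep : ∀ x0 ∈ C0, ∀ x1 ∈ C1, Δ ≤ dist (φ x0) (φ x1))
    -- (iii) chain-connectedness of `CT` to the source clusters
    (CT : Set X) (hCTim : φ '' CT ⊆ φ '' (C0 ∪ C1))
    (hCTmass : ENNReal.ofReal (1 - δ3) ≤ pT CT)
    (hCTconn : ∀ x ∈ CT, ∃ x' ∈ CT ∩ (C0 ∪ C1), f x' = f x ∧
      ∃ (m : ℕ) (c : ℕ → X), c 0 = x ∧ c m = x' ∧ (∀ i ≤ m, c i ∈ CT) ∧
        ∀ i < m, dist (c i) (c (i + 1)) < Δ / L) :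
    ∫ z, (|h z - gT z| - |h z - gS z|) ∂(pT.map φ) ≤
      2 * δ1 + 2 * (1 + β) * δ2 + δ3 := by
  classical
  haveI hμTprob : IsProbabilityMeasure (pT.map φ) := Measure.isProbabilityMeasure_map hφ.aemeasurable
  haveI hμSprob : IsProbabilityMeasure (pS.map φ) := Measure.isProbabilityMeasure_map hφ.aemeasurable
  have hδ1 : 0 ≤ δ1 := aux_nonneg (pT.map φ) hBmass
  have hδ2 : 0 ≤ δ2 := aux_nonneg pS hCmass
  have hδ3 : 0 ≤ δ3 := aux_nonneg pT hCTmass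
  have hβ' : (0:ℝ) ≤ 1 + β := by linarith
  -- the clusters in Z
  set D0 : Set Z := ⋃ x ∈ C0, Metric.ball (φ x) (Δ/2) with hD0def
  set D1 : Set Z := ⋃ x ∈ C1, Metric.ball (φ x) (Δ/2) with hD1def
  have hD0m : MeasurableSet D0 :=
    (isOpen_biUnion fun _ _ => Metric.isOpen_ball).measurableSet
  have hD1m : MeasurableSet D1 :=
    (isOpen_biUnion fun _ _ => Metric.isOpen_ball).measurableSet
  have hmemD0 : ∀ z, z ∈ D0 ↔ ∃ x ∈ C0, dist z (φ x) < Δ/2 := by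
    intro z; simp [hD0def, Metric.mem_ball]
  have hmemD1 : ∀ z, z ∈ D1 ↔ ∃ x ∈ C1, dist z (φ x) < Δ/2 := by
    intro z; simp [hD1def, Metric.mem_ball]
  have himD0 : φ '' C0 ⊆ D0 := by
    rintro z ⟨x, hx, rfl⟩
    exact (hmemD0 _).2 ⟨x, hx, by simpa using half_pos hΔ⟩
  have himD1 : φ '' C1 ⊆ D1 := by
    rintro z ⟨x, hx, rfl⟩
    exact (hmemD1 _).2 ⟨x, hx, by simpa using half_pos hΔ⟩
  have hD01 : Disjoint D0 D1 := by
    rw [Set.disjoint_left]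
    intro z h0 h1
    obtain ⟨x0, hx0, hd0⟩ := (hmemD0 z).1 h0
    obtain ⟨x1, hx1, hd1⟩ := (hmemD1 z).1 h1
    have h2 := hsep x0 hx0 x1 hx1
    have h3 : dist (φ x0) (φ x1) ≤ dist z (φ x0) + dist z (φ x1) := by
      calc dist (φ x0) (φ x1) ≤ dist (φ x0) z + dist z (φ x1) := dist_triangle _ _ _
        _ = dist z (φ x0) + dist z (φ x1) := by rw [dist_comm (φ x0) z]
    linarith
  have hC1D0 : ∀ x ∈ C1, φ x ∉ D0 := by
    intro x hx hmem
    obtain ⟨x0, hx0, hd⟩ := (hmemD0 _).1 hmem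
    have h2 := hsep x0 hx0 x hx
    rw [dist_comm] at hd
    linarith
  have hC0D1 : ∀ x ∈ C0, φ x ∉ D1 := by
    intro x hx hmem
    obtain ⟨x1, hx1, hd⟩ := (hmemD1 _).1 hmem
    have h2 := hsep x hx x1 hx1
    linarith [dist_comm (φ x) (φ x1) ▸ hd]
  -- each chain step moves less than Δ in Z
  have hstepΔ : ∀ x1 x2 : X, dist x1 x2 < Δ / L → dist (φ x1) (φ x2) < Δ := by
    intro x1 x2 hd
    rcases lt_or_ge 0 L with hL | hL
    · have h1 := hLip x1 x2
      have h2 : L * dist x1 x2 < L * (Δ / L) := mul_lt_mul_of_pos_left hd hL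
      rw [mul_div_cancel₀ _ (ne_of_gt hL)] at h2
      linarith
    · exfalso
      have hDL : Δ / L ≤ 0 := by
        rcases lt_or_eq_of_le hL with h' | h'
        · exact le_of_lt (div_neg_of_pos_of_neg hΔ h')
        · simp [h']
      linarith [dist_nonneg (x := x1) (y := x2)]
  have himdisj : ∀ z, z ∈ φ '' C0 → z ∈ φ '' C1 → False := by
    rintro z ⟨x0, hx0, h0⟩ ⟨x1, hx1, h1⟩
    have h2 := hsep x0 hx0 x1 hx1
    rw [h0, h1, dist_self] at h2
    linarith
  have hcross : ∀ z1 z2 : Z, z1 ∈ φ '' (C0 ∪ C1) → z2 ∈ φ '' (C0 ∪ C1) →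
      dist z1 z2 < Δ → (z1 ∈ φ '' C0 ↔ z2 ∈ φ '' C0) := by
    intro z1 z2 h1 h2 hd
    rw [Set.image_union] at h1 h2
    constructor
    · intro hz1
      rcases h2 with h2 | h2
      · exact h2
      · exfalso
        obtain ⟨x0, hx0, hx0e⟩ := hz1
        obtain ⟨x1, hx1, hx1e⟩ := h2
        have h3 := hsep x0 hx0 x1 hx1
        rw [hx0e, hx1e] at h3
        linarith
    · intro hz2
      rcases h1 with h1 | h1
      · exact h1
      · exfalso
        obtain ⟨x0, hx0, hx0e⟩ := hz2
        obtain ⟨x1, hx1, hx1e⟩ := h1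
        have h3 := hsep x0 hx0 x1 hx1
        rw [hx0e, hx1e, dist_comm] at h3
        linarith
  -- Claim C : on CT, the label determines which cluster the image lies in
  have claimC : ∀ x ∈ CT, (f x = 0 ∧ φ x ∈ D0) ∨ (f x = 1 ∧ φ x ∈ D1) := by
    intro x hx
    obtain ⟨x', ⟨hx'CT, hx'E⟩, hfeq, m, c, hc0, hcm, hcmem, hcstep⟩ := hCTconn x hx
    have hmemim : ∀ i ≤ m, φ (c i) ∈ φ '' (C0 ∪ C1) := fun i hi =>
      hCTim ⟨c i, hcmem i hi, rfl⟩
    have hkey : ∀ i ≤ m, (φ (c i) ∈ φ '' C0 ↔ φ (c 0) ∈ φ '' C0) := by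
      intro i
      induction i with
      | zero => intro _; exact Iff.rfl
      | succ n ih =>
        intro hn
        have hn' : n ≤ m := Nat.le_of_succ_le hn
        have hlt : n < m := hn
        have hd : dist (φ (c n)) (φ (c (n+1))) < Δ := hstepΔ _ _ (hcstep n hlt)
        exact ((hcross _ _ (hmemim n hn') (hmemim (n+1) hn) hd).symm).trans (ih hn')
    rcases hx'E with hx'0 | hx'1
    · left
      refine ⟨by rw [← hfeq]; exact hC0 x' hx'0, ?_⟩
      have h1 : φ (c m) ∈ φ '' C0 := by rw [hcm]; exact ⟨x', hx'0, rfl⟩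
      have h2 := (hkey m le_rfl).1 h1
      rw [hc0] at h2
      exact himD0 h2
    · right
      refine ⟨by rw [← hfeq]; exact hC1 x' hx'1, ?_⟩
      have h1 : φ (c m) ∈ φ '' C1 := by rw [hcm]; exact ⟨x', hx'1, rfl⟩
      have h2 : φ (c m) ∉ φ '' C0 := fun hcc => himdisj _ hcc h1
      have h3 : φ (c 0) ∉ φ '' C0 := fun hcc => h2 ((hkey m le_rfl).2 hcc)
      have h4 := hmemim 0 (Nat.zero_le m)
      rw [Set.image_union] at h4
      rcases h4 with h4 | h4
      · exact absurd h4 h3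
      · rw [hc0] at h4
        exact himD1 h4
  -- measurable sets in X
  set F1 : Set X := f ⁻¹' {1} with hF1def
  have hF1m : MeasurableSet F1 := hf (measurableSet_singleton 1)
  set W : Set Z := D0 ∪ D1 with hWdef
  have hWm : MeasurableSet W := hD0m.union hD1m
  -- the three small target sets
  have hsub1 : (φ ⁻¹' W)ᶜ ⊆ CTᶜ := by
    intro x hx hxCT
    rcases claimC x hxCT with ⟨_, hD⟩ | ⟨_, hD⟩
    · exact hx (Or.inl hD)
    · exact hx (Or.inr hD)
  have hsub2 : F1 ∩ φ ⁻¹' D0 ⊆ CTᶜ := by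
    rintro x ⟨hxF, hxD⟩ hxCT
    rcases claimC x hxCT with ⟨hf0, _⟩ | ⟨_, hD⟩
    · have : f x = 1 := hxF
      rw [hf0] at this; norm_num at this
    · exact (Set.disjoint_left.1 hD01) hxD hD
  have hsub3 : F1ᶜ ∩ φ ⁻¹' D1 ⊆ CTᶜ := by
    rintro x ⟨hxF, hxD⟩ hxCT
    rcases claimC x hxCT with ⟨_, hD⟩ | ⟨hf1, _⟩
    · exact (Set.disjoint_left.1 hD01) hD hxD
    · exact hxF hf1
  -- the two small source sets
  have hsub2S : F1 ∩ φ ⁻¹' D0 ⊆ (C0 ∪ C1)ᶜ := by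
    rintro x ⟨hxF, hxD⟩ hxE
    rcases hxE with hx0 | hx1
    · have : f x = 1 := hxF
      rw [hC0 x hx0] at this; norm_num at this
    · exact hC1D0 x hx1 hxD
  have hsub3S : F1ᶜ ∩ φ ⁻¹' D1 ⊆ (C0 ∪ C1)ᶜ := by
    rintro x ⟨hxF, hxD⟩ hxE
    rcases hxE with hx0 | hx1
    · exact hC0D1 x hx0 hxD
    · exact hxF (hC1 x hx1)
  -- measurability
  have hm1 : MeasurableSet ((φ ⁻¹' W)ᶜ) := (hφ hWm).compl
  have hm2 : MeasurableSet (F1 ∩ φ ⁻¹' D0) := hF1m.inter (hφ hD0m)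
  have hm3 : MeasurableSet (F1ᶜ ∩ φ ⁻¹' D1) := hF1m.compl.inter (hφ hD1m)
  -- target mass bound: the three sets are disjoint, all inside CTᶜ
  have hTbound : pT ((φ ⁻¹' W)ᶜ) + pT (F1 ∩ φ ⁻¹' D0) + pT (F1ᶜ ∩ φ ⁻¹' D1)
      ≤ ENNReal.ofReal δ3 := by
    have hd12 : Disjoint ((φ ⁻¹' W)ᶜ) (F1 ∩ φ ⁻¹' D0) := by
      rw [Set.disjoint_left]
      rintro x hx ⟨_, hxD⟩
      exact hx (Or.inl hxD)
    have hd13 : Disjoint ((φ ⁻¹' W)ᶜ ∪ (F1 ∩ φ ⁻¹' D0)) (F1ᶜ ∩ φ ⁻¹' D1) := by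
      rw [Set.disjoint_left]
      rintro x hx ⟨hxF, hxD⟩
      rcases hx with hx | ⟨hxF', _⟩
      · exact hx (Or.inr hxD)
      · exact hxF hxF'
    have heq : pT ((φ ⁻¹' W)ᶜ) + pT (F1 ∩ φ ⁻¹' D0) + pT (F1ᶜ ∩ φ ⁻¹' D1)
        = pT (((φ ⁻¹' W)ᶜ ∪ (F1 ∩ φ ⁻¹' D0)) ∪ (F1ᶜ ∩ φ ⁻¹' D1)) := by
      rw [measure_union hd13 hm3, measure_union hd12 hm2]
    rw [heq]
    refine aux_small pT hCTmass ((hm1.union hm2).union hm3) ?_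
    intro x hx
    rcases hx with hx | hx
    · rcases hx with hx | hx
      · exact hsub1 hx
      · exact hsub2 hx
    · exact hsub3 hx
  -- source mass bound
  have hSbound : pS (F1 ∩ φ ⁻¹' D0) + pS (F1ᶜ ∩ φ ⁻¹' D1) ≤ ENNReal.ofReal δ2 := by
    have hd23 : Disjoint (F1 ∩ φ ⁻¹' D0) (F1ᶜ ∩ φ ⁻¹' D1) := by
      rw [Set.disjoint_left]
      rintro x ⟨hxF, _⟩ ⟨hxF', _⟩
      exact hxF' hxF
    rw [← measure_union hd23 hm3]
    refine aux_small pS hCmass (hm2.union hm3) ?_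
    intro x hx
    rcases hx with hx | hx
    · exact hsub2S hx
    · exact hsub3S hx
  -- real versions
  have hTbound' : (pT ((φ ⁻¹' W)ᶜ)).toReal + (pT (F1 ∩ φ ⁻¹' D0)).toReal
      + (pT (F1ᶜ ∩ φ ⁻¹' D1)).toReal ≤ δ3 := by
    rw [← ENNReal.toReal_add (measure_ne_top _ _) (measure_ne_top _ _),
      ← ENNReal.toReal_add (by exact ENNReal.add_ne_top.2 ⟨measure_ne_top _ _, measure_ne_top _ _⟩)
        (measure_ne_top _ _)]
    exact ENNReal.toReal_le_of_le_ofReal hδ3 hTbound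
  have hSbound' : (pS (F1 ∩ φ ⁻¹' D0)).toReal + (pS (F1ᶜ ∩ φ ⁻¹' D1)).toReal ≤ δ2 := by
    rw [← ENNReal.toReal_add (measure_ne_top _ _) (measure_ne_top _ _)]
    exact ENNReal.toReal_le_of_le_ofReal hδ2 hSbound
  -- the indicator ψ of D1
  set ψ : Z → ℝ := Set.indicator D1 (fun _ => 1) with hψdef
  have hψm : Measurable ψ := measurable_const.indicator hD1m
  have hψD0 : ∀ z ∈ D0, ψ z = 0 := by
    intro z hz
    have : z ∉ D1 := fun hz1 => (Set.disjoint_left.1 hD01) hz hz1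
    simp [hψdef, Set.indicator_apply, this]
  have hψD1 : ∀ z ∈ D1, ψ z = 1 := by
    intro z hz
    simp [hψdef, Set.indicator_apply, hz]
  -- pointwise bounds
  set q : Z → ℝ := fun z => |h z - gT z| - |h z - gS z| with hqdef
  have hqm : Measurable q := ((hh.sub hgT).abs).sub ((hh.sub hgS).abs)
  have habsT : ∀ z, |h z - gT z| ≤ 1 := by
    intro z
    obtain ⟨h0, h1⟩ := hgT01 z
    rcases hh01 z with he | he <;> rw [abs_le] <;> constructor <;> linarith
  have habsS : ∀ z, |h z - gS z| ≤ 1 := by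
    intro z
    obtain ⟨h0, h1⟩ := hgS01 z
    rcases hh01 z with he | he <;> rw [abs_le] <;> constructor <;> linarith
  have hq1 : ∀ z, q z ≤ 1 := by
    intro z
    have := abs_nonneg (h z - gS z)
    have := habsT z
    simp only [hqdef]
    linarith
  have hqabs : ∀ z, |q z| ≤ 2 := by
    intro z
    have h1 := habsT z
    have h2 := habsS z
    have h3 := abs_nonneg (h z - gT z)
    have h4 := abs_nonneg (h z - gS z)
    rw [abs_le]
    constructor <;> simp only [hqdef] <;> linarith
  have hq2 : ∀ z, q z ≤ |gT z - ψ z| + |gS z - ψ z| := by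
    intro z
    have h1 : |h z - gT z| - |h z - gS z| ≤ |(h z - gT z) - (h z - gS z)| :=
      abs_sub_abs_le_abs_sub _ _
    have h2 : |(h z - gT z) - (h z - gS z)| = |gT z - gS z| := by
      rw [show (h z - gT z) - (h z - gS z) = -(gT z - gS z) by ring, abs_neg]
    have h3 : |gT z - gS z| ≤ |gT z - ψ z| + |ψ z - gS z| := abs_sub_le _ _ _
    have h4 : |ψ z - gS z| = |gS z - ψ z| := abs_sub_comm _ _
    simp only [hqdef]
    linarith [h2 ▸ h1]
  -- integrability
  have hint : ∀ (μ : Measure Z) [IsFiniteMeasure μ] (k : Z → ℝ), Measurable k →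
      (∀ z, |k z| ≤ 2) → Integrable k μ := by
    intro μ _ k hk hbd
    exact Integrable.mono' (integrable_const 2) hk.aestronglyMeasurable
      (Filter.Eventually.of_forall hbd)
  have hqint : Integrable q (pT.map φ) := hint _ q hqm hqabs
  have hgTψm : Measurable fun z => |gT z - ψ z| := (hgT.sub hψm).abs
  have hgSψm : Measurable fun z => |gS z - ψ z| := (hgS.sub hψm).abs
  have hgTψb : ∀ z, |(fun z => |gT z - ψ z|) z| ≤ 2 := by
    intro z
    obtain ⟨h0, h1⟩ := hgT01 z
    have hψb : 0 ≤ ψ z ∧ ψ z ≤ 1 := by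
      by_cases hz : z ∈ D1 <;> simp [hψdef, Set.indicator_apply, hz]
    rw [abs_abs, abs_le]
    constructor <;> [linarith [hψb.1, hψb.2]; linarith [hψb.1, hψb.2]]
  have hgSψb : ∀ z, |(fun z => |gS z - ψ z|) z| ≤ 2 := by
    intro z
    obtain ⟨h0, h1⟩ := hgS01 z
    have hψb : 0 ≤ ψ z ∧ ψ z ≤ 1 := by
      by_cases hz : z ∈ D1 <;> simp [hψdef, Set.indicator_apply, hz]
    rw [abs_abs, abs_le]
    constructor <;> [linarith [hψb.1, hψb.2]; linarith [hψb.1, hψb.2]]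
  have hgTψintT : Integrable (fun z => |gT z - ψ z|) (pT.map φ) := hint _ _ hgTψm hgTψb
  have hgSψintT : Integrable (fun z => |gS z - ψ z|) (pT.map φ) := hint _ _ hgSψm hgSψb
  have hgSψintS : Integrable (fun z => |gS z - ψ z|) (pS.map φ) := hint _ _ hgSψm hgSψb
  -- decomposition of the integral
  have split1 : ∫ z, q z ∂(pT.map φ)
      = (∫ z in B, q z ∂(pT.map φ)) + ∫ z in Bᶜ, q z ∂(pT.map φ) :=
    (integral_add_compl hB hqint).symm
  have split2 : ∫ z in B, q z ∂(pT.map φ)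
      = (∫ z in B ∩ W, q z ∂(pT.map φ)) + ∫ z in B \ W, q z ∂(pT.map φ) :=
    (integral_inter_add_diff hWm hqint.integrableOn).symm
  -- piece 1 : Bᶜ
  have hBc : ∫ z in Bᶜ, q z ∂(pT.map φ) ≤ δ1 := by
    have h1 : ∫ z in Bᶜ, q z ∂(pT.map φ) ≤ ∫ _z in Bᶜ, (1:ℝ) ∂(pT.map φ) :=
      setIntegral_mono hqint.integrableOn (integrable_const 1).integrableOn hq1
    rw [setIntegral_const, smul_eq_mul, mul_one] at h1
    have h2 : (pT.map φ) Bᶜ ≤ ENNReal.ofReal δ1 :=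
      aux_small (pT.map φ) hBmass hB.compl (subset_refl _)
    have h3 := ENNReal.toReal_le_of_le_ofReal hδ1 h2
    linarith [show ((pT.map φ).real Bᶜ) = ((pT.map φ) Bᶜ).toReal from rfl]
  -- piece 2 : B \ W
  have hBW : ∫ z in B \ W, q z ∂(pT.map φ) ≤ (pT ((φ ⁻¹' W)ᶜ)).toReal := by
    have h1 : ∫ z in B \ W, q z ∂(pT.map φ) ≤ ∫ _z in B \ W, (1:ℝ) ∂(pT.map φ) :=
      setIntegral_mono hqint.integrableOn (integrable_const 1).integrableOn hq1
    rw [setIntegral_const, smul_eq_mul, mul_one] at h1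
    have h2 : (pT.map φ) (B \ W) ≤ (pT.map φ) Wᶜ :=
      measure_mono fun z hz => hz.2
    have h3 : (pT.map φ) Wᶜ = pT ((φ ⁻¹' W)ᶜ) := by
      rw [Measure.map_apply hφ hWm.compl, Set.preimage_compl]
    calc ∫ z in B \ W, q z ∂(pT.map φ) ≤ ((pT.map φ) (B \ W)).toReal := h1
      _ ≤ (pT ((φ ⁻¹' W)ᶜ)).toReal := by
          rw [← h3]
          exact ENNReal.toReal_mono (measure_ne_top _ _) h2
  -- piece 3 : B ∩ W
  have hsplit3 : ∫ z in B ∩ W, q z ∂(pT.map φ)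
      ≤ (∫ z in B ∩ W, |gT z - ψ z| ∂(pT.map φ))
        + ∫ z in B ∩ W, |gS z - ψ z| ∂(pT.map φ) := by
    have h1 : ∫ z in B ∩ W, q z ∂(pT.map φ)
        ≤ ∫ z in B ∩ W, (|gT z - ψ z| + |gS z - ψ z|) ∂(pT.map φ) :=
      setIntegral_mono hqint.integrableOn
        (hgTψintT.add hgSψintT).integrableOn hq2
    rwa [integral_add hgTψintT.integrableOn hgSψintT.integrableOn] at h1
  -- identification of ∫_W |gT - ψ| dμT
  have hWT : ∫ z in W, |gT z - ψ z| ∂(pT.map φ)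
      = (pT (F1 ∩ φ ⁻¹' D0)).toReal + (pT (F1ᶜ ∩ φ ⁻¹' D1)).toReal := by
    rw [hWdef, setIntegral_union hD01 hD1m hgTψintT.integrableOn hgTψintT.integrableOn]
    have e0 : ∫ z in D0, |gT z - ψ z| ∂(pT.map φ) = ∫ z in D0, gT z ∂(pT.map φ) :=
      setIntegral_congr_fun hD0m fun z hz => by
        rw [hψD0 z hz, sub_zero, abs_of_nonneg (hgT01 z).1]
    have e1 : ∫ z in D1, |gT z - ψ z| ∂(pT.map φ) = ∫ z in D1, (1 - gT z) ∂(pT.map φ) :=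
      setIntegral_congr_fun hD1m fun z hz => by
        rw [hψD1 z hz, abs_sub_comm, abs_of_nonneg (by linarith [(hgT01 z).2])]
    have hgTint : Integrable gT (pT.map φ) := by
      refine hint _ _ hgT fun z => ?_
      obtain ⟨h0, h1⟩ := hgT01 z
      rw [abs_le]; constructor <;> linarith
    have e2 : ∫ z in D1, (1 - gT z) ∂(pT.map φ)
        = ((pT.map φ) D1).toReal - ∫ z in D1, gT z ∂(pT.map φ) := by
      rw [integral_sub (integrable_const _).integrableOn hgTint.integrableOn,
        setIntegral_const, smul_eq_mul, mul_one]
      rfl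
    rw [e0, e1, e2, aux_cond pT hf hf01 hφ hgT hcondT hD0m,
      aux_cond pT hf hf01 hφ hgT hcondT hD1m, Measure.map_apply hφ hD1m]
    have e3 : pT (f ⁻¹' {1} ∩ φ ⁻¹' D1) + pT (F1ᶜ ∩ φ ⁻¹' D1) = pT (φ ⁻¹' D1) := by
      have h4 := measure_inter_add_diff (μ := pT) (φ ⁻¹' D1) hF1m
      rw [Set.inter_comm, Set.diff_eq, Set.inter_comm (φ ⁻¹' D1) F1ᶜ] at h4
      exact h4
    rw [← e3, ENNReal.toReal_add (measure_ne_top _ _) (measure_ne_top _ _)]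
    rw [hF1def]
    ring
  -- identification of ∫_W |gS - ψ| dμS
  have hWS : ∫ z in W, |gS z - ψ z| ∂(pS.map φ)
      = (pS (F1 ∩ φ ⁻¹' D0)).toReal + (pS (F1ᶜ ∩ φ ⁻¹' D1)).toReal := by
    rw [hWdef, setIntegral_union hD01 hD1m hgSψintS.integrableOn hgSψintS.integrableOn]
    have e0 : ∫ z in D0, |gS z - ψ z| ∂(pS.map φ) = ∫ z in D0, gS z ∂(pS.map φ) :=
      setIntegral_congr_fun hD0m fun z hz => by
        rw [hψD0 z hz, sub_zero, abs_of_nonneg (hgS01 z).1]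
    have e1 : ∫ z in D1, |gS z - ψ z| ∂(pS.map φ) = ∫ z in D1, (1 - gS z) ∂(pS.map φ) :=
      setIntegral_congr_fun hD1m fun z hz => by
        rw [hψD1 z hz, abs_sub_comm, abs_of_nonneg (by linarith [(hgS01 z).2])]
    have hgSint : Integrable gS (pS.map φ) := by
      refine hint _ _ hgS fun z => ?_
      obtain ⟨h0, h1⟩ := hgS01 z
      rw [abs_le]; constructor <;> linarith
    have e2 : ∫ z in D1, (1 - gS z) ∂(pS.map φ)
        = ((pS.map φ) D1).toReal - ∫ z in D1, gS z ∂(pS.map φ) := by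
      rw [integral_sub (integrable_const _).integrableOn hgSint.integrableOn,
        setIntegral_const, smul_eq_mul, mul_one]
      rfl
    rw [e0, e1, e2, aux_cond pS hf hf01 hφ hgS hcondS hD0m,
      aux_cond pS hf hf01 hφ hgS hcondS hD1m, Measure.map_apply hφ hD1m]
    have e3 : pS (f ⁻¹' {1} ∩ φ ⁻¹' D1) + pS (F1ᶜ ∩ φ ⁻¹' D1) = pS (φ ⁻¹' D1) := by
      have h4 := measure_inter_add_diff (μ := pS) (φ ⁻¹' D1) hF1m
      rw [Set.inter_comm, Set.diff_eq, Set.inter_comm (φ ⁻¹' D1) F1ᶜ] at h4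
      exact h4
    rw [← e3, ENNReal.toReal_add (measure_ne_top _ _) (measure_ne_top _ _)]
    rw [hF1def]
    ring
  -- bound A1
  have hA1 : ∫ z in B ∩ W, |gT z - ψ z| ∂(pT.map φ)
      ≤ (pT (F1 ∩ φ ⁻¹' D0)).toReal + (pT (F1ᶜ ∩ φ ⁻¹' D1)).toReal := by
    rw [← hWT]
    exact setIntegral_mono_set hgTψintT.integrableOn
      (Filter.Eventually.of_forall fun z => abs_nonneg _)
      (Filter.Eventually.of_forall fun z hz => hz.2)
  -- bound A2 : change measure from pT.map φ to pS.map φ on B ∩ W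
  have hA2 : ∫ z in B ∩ W, |gS z - ψ z| ∂(pT.map φ) ≤ (1 + β) * δ2 := by
    have hres : (pT.map φ).restrict (B ∩ W)
        ≤ ENNReal.ofReal (1 + β) • (pS.map φ).restrict (B ∩ W) := by
      have e : ∀ μ : Measure Z, (μ.restrict B).restrict (B ∩ W) = μ.restrict (B ∩ W) := by
        intro μ
        rw [Measure.restrict_restrict (hB.inter hWm),
          Set.inter_eq_self_of_subset_left Set.inter_subset_left]
      calc (pT.map φ).restrict (B ∩ W) = ((pT.map φ).restrict B).restrict (B ∩ W) :=
            (e _).symm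
        _ ≤ (ENNReal.ofReal (1 + β) • (pS.map φ).restrict B).restrict (B ∩ W) :=
            Measure.restrict_mono (subset_refl _) hratio
        _ = ENNReal.ofReal (1 + β) • ((pS.map φ).restrict B).restrict (B ∩ W) :=
            Measure.restrict_smul _ _ _
        _ = ENNReal.ofReal (1 + β) • (pS.map φ).restrict (B ∩ W) := by rw [e]
    have hmono : ∫ z in B ∩ W, |gS z - ψ z| ∂(pT.map φ)
        ≤ ∫ z, |gS z - ψ z| ∂(ENNReal.ofReal (1 + β) • (pS.map φ).restrict (B ∩ W)) :=
      integral_mono_measure hres (Filter.Eventually.of_forall fun z => abs_nonneg _)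
        (hgSψintS.integrableOn.smul_measure ENNReal.ofReal_ne_top)
    rw [integral_smul_measure, ENNReal.toReal_ofReal hβ', smul_eq_mul] at hmono
    have h4 : ∫ z in B ∩ W, |gS z - ψ z| ∂(pS.map φ)
        ≤ ∫ z in W, |gS z - ψ z| ∂(pS.map φ) :=
      setIntegral_mono_set hgSψintS.integrableOn
        (Filter.Eventually.of_forall fun z => abs_nonneg _)
        (Filter.Eventually.of_forall fun z hz => hz.2)
    have h5 : ∫ z in W, |gS z - ψ z| ∂(pS.map φ) ≤ δ2 := by rw [hWS]; exact hSbound'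
    calc ∫ z in B ∩ W, |gS z - ψ z| ∂(pT.map φ)
        ≤ (1 + β) * ∫ z in B ∩ W, |gS z - ψ z| ∂(pS.map φ) := hmono
      _ ≤ (1 + β) * δ2 := by
          apply mul_le_mul_of_nonneg_left _ hβ'
          linarith
  -- final assembly
  have hprod : 0 ≤ (1 + β) * δ2 := mul_nonneg hβ' hδ2
  have := hTbound'
  calc ∫ z, (|h z - gT z| - |h z - gS z|) ∂(pT.map φ)
      = (∫ z in B ∩ W, q z ∂(pT.map φ)) + (∫ z in B \ W, q z ∂(pT.map φ))
        + ∫ z in Bᶜ, q z ∂(pT.map φ) := by rw [← split2]; exact split1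
    _ ≤ ((pT (F1 ∩ φ ⁻¹' D0)).toReal + (pT (F1ᶜ ∩ φ ⁻¹' D1)).toReal + (1 + β) * δ2)
        + (pT ((φ ⁻¹' W)ᶜ)).toReal + δ1 := by
        have := hsplit3
        have := hA1
        have := hA2
        have := hBW
        have := hBc
        linarith
    _ ≤ 2 * δ1 + 2 * (1 + β) * δ2 + δ3 := by linarith
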